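/- Define f(η) = (√(n₃)·(1/√2) + √(n₅)·√(1/4 + η) + √(n₆)·√(1/4 - η))² for η ∈ [-1/4, 1/4], where n₃, n₅, n₆ ≥ 0, n₅ + n₆ = 1 - n₃, and n₃ ∈ (1/2, 1). Then f attains its maximum at η* = (n₅ - n₆)/(4(1 - n₃)), and the maximum value is (1/2)(√n₃ + √(1-n₃))². -/

import Mathlib

/-- Maximization of the overlap `|⟨Ψ_BD|Ψ_s(η)⟩|²`: the function
`f(η) = (√n₃·(1/√2) + √n₅·√(1/4+η) + √n₆·√(1/4-η))²` on `[-1/4, 1/4]`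
attains its maximum at `η* = (n₅ - n₆)/(4(1-n₃))`, with maximum value
`(1/2)(√n₃ + √(1-n₃))²`. -/
theorem overlap_maximization (n₃ n₅ n₆ : ℝ)
    (h₃ : 0 ≤ n₃) (h₅ : 0 ≤ n₅) (h₆ : 0 ≤ n₆)
    (hsum : n₅ + n₆ = 1 - n₃) (hlo : 1 / 2 < n₃) (hhi : n₃ < 1) :
    (n₅ - n₆) / (4 * (1 - n₃)) ∈ Set.Icc (-(1 / 4) : ℝ) (1 / 4) ∧
    IsMaxOn
      (fun η : ℝ => (Real.sqrt n₃ * (1 / Real.sqrt 2) +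
        Real.sqrt n₅ * Real.sqrt (1 / 4 + η) +
        Real.sqrt n₆ * Real.sqrt (1 / 4 - η)) ^ 2)
      (Set.Icc (-(1 / 4) : ℝ) (1 / 4)) ((n₅ - n₆) / (4 * (1 - n₃))) ∧
    (fun η : ℝ => (Real.sqrt n₃ * (1 / Real.sqrt 2) +
        Real.sqrt n₅ * Real.sqrt (1 / 4 + η) +
        Real.sqrt n₆ * Real.sqrt (1 / 4 - η)) ^ 2)
      ((n₅ - n₆) / (4 * (1 - n₃))) =
      (1 / 2) * (Real.sqrt n₃ + Real.sqrt (1 - n₃)) ^ 2 := by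
  set s : ℝ := 1 - n₃ with hs
  have hspos : 0 < s := by simp [hs]; linarith
  have hmem : (n₅ - n₆) / (4 * s) ∈ Set.Icc (-(1 / 4) : ℝ) (1 / 4) := by
    constructor
    · rw [le_div_iff₀ (by positivity)]; nlinarith
    · rw [div_le_iff₀ (by positivity)]; nlinarith
  -- value at η*
  have harg₁ : (1 / 4 : ℝ) + (n₅ - n₆) / (4 * s) = n₅ / (2 * s) := by
    field_simp; nlinarith [hspos, hsum]
  have harg₂ : (1 / 4 : ℝ) - (n₅ - n₆) / (4 * s) = n₆ / (2 * s) := by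
    field_simp; nlinarith [hspos, hsum]
  have h2s : (0:ℝ) < 2 * s := by linarith
  have hval : (Real.sqrt n₃ * (1 / Real.sqrt 2) +
        Real.sqrt n₅ * Real.sqrt (1 / 4 + (n₅ - n₆) / (4 * s)) +
        Real.sqrt n₆ * Real.sqrt (1 / 4 - (n₅ - n₆) / (4 * s))) ^ 2 =
      (1 / 2) * (Real.sqrt n₃ + Real.sqrt s) ^ 2 := by
    rw [harg₁, harg₂, Real.sqrt_div h₅, Real.sqrt_div h₆]
    have hsq5 : Real.sqrt n₅ * (Real.sqrt n₅ / Real.sqrt (2 * s)) =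
        n₅ / Real.sqrt (2 * s) := by
      rw [mul_div_assoc'] ; rw [Real.mul_self_sqrt h₅]
    have hsq6 : Real.sqrt n₆ * (Real.sqrt n₆ / Real.sqrt (2 * s)) =
        n₆ / Real.sqrt (2 * s) := by
      rw [mul_div_assoc'] ; rw [Real.mul_self_sqrt h₆]
    rw [hsq5, hsq6]
    have h2s' : Real.sqrt (2 * s) = Real.sqrt 2 * Real.sqrt s := by
      rw [Real.sqrt_mul (by norm_num)]
    have hss : n₅ / Real.sqrt (2 * s) + n₆ / Real.sqrt (2 * s) =
        Real.sqrt s / Real.sqrt 2 := by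
      rw [← add_div, hsum, h2s',
        div_eq_div_iff (by positivity : Real.sqrt 2 * Real.sqrt s ≠ 0)
          (by positivity : Real.sqrt 2 ≠ 0)]
      linear_combination (-Real.sqrt 2) * Real.mul_self_sqrt hspos.le
    have h2pos : (0:ℝ) < Real.sqrt 2 := by positivity
    rw [add_assoc, hss]
    rw [show Real.sqrt n₃ * (1 / Real.sqrt 2) + Real.sqrt s / Real.sqrt 2 =
        (Real.sqrt n₃ + Real.sqrt s) / Real.sqrt 2 by ring]
    rw [div_pow, Real.sq_sqrt (by norm_num : (0:ℝ) ≤ 2)]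
    ring
  refine ⟨hmem, ?_, hval⟩
  -- maximality
  intro η hη
  simp only [Set.mem_setOf_eq]
  rw [hval]
  obtain ⟨hη1, hη2⟩ := hη
  have hu : (0:ℝ) ≤ 1 / 4 + η := by linarith
  have hv : (0:ℝ) ≤ 1 / 4 - η := by linarith
  set u := Real.sqrt (1 / 4 + η)
  set v := Real.sqrt (1 / 4 - η)
  have hu0 : 0 ≤ u := Real.sqrt_nonneg _
  have hv0 : 0 ≤ v := Real.sqrt_nonneg _
  have huv : u ^ 2 + v ^ 2 = 1 / 2 := by
    rw [Real.sq_sqrt hu, Real.sq_sqrt hv]; ring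
  have ha : Real.sqrt n₅ ^ 2 = n₅ := Real.sq_sqrt h₅
  have hb : Real.sqrt n₆ ^ 2 = n₆ := Real.sq_sqrt h₆
  have hA : Real.sqrt n₃ ^ 2 = n₃ := Real.sq_sqrt h₃
  have hS : Real.sqrt s ^ 2 = s := Real.sq_sqrt hspos.le
  have hr : Real.sqrt 2 ^ 2 = 2 := Real.sq_sqrt (by norm_num)
  have hr0 : (0:ℝ) < Real.sqrt 2 := by positivity
  -- Cauchy-Schwarz: (a u + b v)² ≤ (n₅+n₆)(u²+v²) = s/2
  have hcs : (Real.sqrt n₅ * u + Real.sqrt n₆ * v) ^ 2 ≤ s / 2 := by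
    nlinarith [sq_nonneg (Real.sqrt n₅ * v - Real.sqrt n₆ * u)]
  have ht0 : 0 ≤ Real.sqrt n₅ * u + Real.sqrt n₆ * v := by positivity
  have ht : Real.sqrt n₅ * u + Real.sqrt n₆ * v ≤ Real.sqrt s / Real.sqrt 2 := by
    have h1 : Real.sqrt n₅ * u + Real.sqrt n₆ * v =
        Real.sqrt ((Real.sqrt n₅ * u + Real.sqrt n₆ * v) ^ 2) :=
      (Real.sqrt_sq ht0).symm
    rw [h1, ← Real.sqrt_div hspos.le 2]
    exact Real.sqrt_le_sqrt hcs
  have hA0 : 0 ≤ Real.sqrt n₃ := Real.sqrt_nonneg _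
  have hS0 : 0 ≤ Real.sqrt s := Real.sqrt_nonneg _
  have key : (Real.sqrt n₃ * (1 / Real.sqrt 2) + (Real.sqrt n₅ * u + Real.sqrt n₆ * v)) ^ 2
      ≤ (Real.sqrt n₃ * (1 / Real.sqrt 2) + Real.sqrt s / Real.sqrt 2) ^ 2 := by
    have h0 : (0:ℝ) ≤ Real.sqrt n₃ * (1 / Real.sqrt 2) +
        (Real.sqrt n₅ * u + Real.sqrt n₆ * v) := by positivity
    exact pow_le_pow_left₀ h0 (by linarith) 2
  calc (Real.sqrt n₃ * (1 / Real.sqrt 2) + Real.sqrt n₅ * u + Real.sqrt n₆ * v) ^ 2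
      = (Real.sqrt n₃ * (1 / Real.sqrt 2) + (Real.sqrt n₅ * u + Real.sqrt n₆ * v)) ^ 2 := by ring
    _ ≤ (Real.sqrt n₃ * (1 / Real.sqrt 2) + Real.sqrt s / Real.sqrt 2) ^ 2 := key
    _ = (Real.sqrt n₃ + Real.sqrt s) ^ 2 / Real.sqrt 2 ^ 2 := by ring
    _ = (1 / 2) * (Real.sqrt n₃ + Real.sqrt s) ^ 2 := by rw [hr]; ring
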